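/- Completeness with respect to relations for the signature {∘, 1, D}: for any {∘, 1, D}-terms s and t over variables Σ, if for every set X and every assignment f of binary relations on X to the variables the relational interpretations of s and t under f coincide, then ⟨s⟩ = ⟨t⟩. -/

import Mathlib

inductive PreTree (α : Type) : Type
  | node : Bool → List (α × PreTree α) → PreTree α

namespace PreTree

variable {α : Type}

def mark : PreTree α → Bool
  | node b _ => b

def children : PreTree α → List (α × PreTree α)
  | node _ cs => cs

def le : PreTree α → PreTree α → Prop
  | node b₁ c₁, node b₂ c₂ =>
      (b₂ = true → b₁ = true) ∧
      ∀ q, q ∈ c₂ → ∃ p, p ∈ c₁ ∧ p.1 = q.1 ∧ le p.2 q.2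
termination_by _ t₂ => sizeOf t₂
decreasing_by
  have h := List.sizeOf_lt_of_mem ‹q ∈ c₂›
  obtain ⟨qa, qt⟩ := q
  simp at h ⊢
  omega

-- The reduced form of a tree: reduce all child subtrees, then for each
-- label keep only the `≤`-minimal attached subtrees.
open scoped Classical in
noncomputable def reduce : PreTree α → PreTree α
  | node b cs =>
      let cs' : List (α × PreTree α) := cs.attach.map fun p => (p.1.1, reduce p.1.2)
      node b (cs'.filter fun q =>
        decide (∀ q' ∈ cs', q'.1 = q.1 → le q'.2 q.2 → le q.2 q'.2))
termination_by t => sizeOf t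
decreasing_by
  have h := List.sizeOf_lt_of_mem p.2
  obtain ⟨⟨pa, pt⟩, hp⟩ := p
  simp at h ⊢
  omega

/-- A tree is reduced if it equals its reduced form. -/
def Reduced (T : PreTree α) : Prop := reduce T = T

/-- The number of marked (point) vertices of a tree. -/
def markCount : PreTree α → ℕ
  | node b cs => (cond b 1 0) + (cs.attach.map fun p => markCount p.1.2).sum
termination_by t => sizeOf t
decreasing_by
  have h := List.sizeOf_lt_of_mem p.2
  obtain ⟨⟨pa, pt⟩, hp⟩ := p
  simp at h ⊢
  omega

/-- A pointed tree: exactly one vertex is marked as the point. -/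
def Pointed (T : PreTree α) : Prop := markCount T = 1

/-- Remove all point marks. -/
def unmark : PreTree α → PreTree α
  | node _ cs => node false (cs.attach.map fun p => (p.1.1, unmark p.1.2))
termination_by t => sizeOf t
decreasing_by
  have h := List.sizeOf_lt_of_mem p.2
  obtain ⟨⟨pa, pt⟩, hp⟩ := p
  simp at h ⊢
  omega

/-- Graft the tree `S` onto the point of `T` (identifying the point of `T`
with the root of `S`); the marks of `S` determine the new point. -/
def graft (S : PreTree α) : PreTree α → PreTree α
  | node b cs =>
      if b then node S.mark (cs ++ S.children)
      else node b (cs.attach.map fun p => (p.1.1, graft S p.1.2))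
termination_by t => sizeOf t
decreasing_by
  have h := List.sizeOf_lt_of_mem p.2
  obtain ⟨⟨pa, pt⟩, hp⟩ := p
  simp at h ⊢
  omega

/-- Move the point of `T` to its root. -/
def pointAtRoot (T : PreTree α) : PreTree α := node true (unmark T).children

/-- Pointed tree concatenation `T ∘ S`. -/
noncomputable def concat (T S : PreTree α) : PreTree α := reduce (graft S T)

/-- The domain operation `D(T)` on pointed trees. -/
noncomputable def domTree (T : PreTree α) : PreTree α := reduce (pointAtRoot T)

/-- The trivial pointed tree: one vertex, both root and point. -/
def trivialTree : PreTree α := node true []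

/-- The two-vertex pointed tree with a single `a`-labelled edge, point at the child. -/
def arrow (a : α) : PreTree α := node false [(a, node true [])]


/-- Set-theoretic equality of trees (children lists regarded as sets). -/
def eqv : PreTree α → PreTree α → Prop
  | node b₁ c₁, node b₂ c₂ =>
      b₁ = b₂ ∧
      (∀ p, p ∈ c₁ → ∃ q, q ∈ c₂ ∧ p.1 = q.1 ∧ eqv p.2 q.2) ∧
      (∀ q, q ∈ c₂ → ∃ p : {x // x ∈ c₁}, p.1.1 = q.1 ∧ eqv p.1.2 q.2)
termination_by t₁ _ => sizeOf t₁
decreasing_by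
  · have h₁ := List.sizeOf_lt_of_mem ‹p ∈ c₁›
    obtain ⟨pa, pt⟩ := p
    simp at h₁ ⊢
    omega
  · have h₁ := List.sizeOf_lt_of_mem p.2
    obtain ⟨⟨pa, pt⟩, hp⟩ := p
    simp at h₁ ⊢
    omega


/-- The subtree of `T` at position `p` (a list of child indices), if it exists. -/
def subAt : List ℕ → PreTree α → Option (PreTree α)
  | [], t => some t
  | i :: is, node _ cs => (cs[i]?).bind fun p => subAt is p.2

/-- `p` is a vertex of `T`. -/
def IsVertex (T : PreTree α) (p : List ℕ) : Prop := ∃ t, subAt p T = some t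

/-- The vertex `p` of `T` is the point (is marked). -/
def IsPoint (T : PreTree α) (p : List ℕ) : Prop :=
  ∃ t, subAt p T = some t ∧ t.mark = true

/-- There is an `a`-labelled edge of `T` from vertex `p` (the parent) to
vertex `q` (the child). -/
def Edge (T : PreTree α) (a : α) (p q : List ℕ) : Prop :=
  ∃ c, subAt p T = some c ∧ ∃ i t, c.children[i]? = some (a, t) ∧ q = p ++ [i]

theorem root_isVertex (T : PreTree α) : IsVertex T [] := ⟨T, rfl⟩

/-- A homomorphism of pointed labelled rooted trees from `S` to `T`:
a map of vertices preserving the labelled edge relations, sending the root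
to the root and points to points. -/
def HomTree (S T : PreTree α) : Prop :=
  ∃ θ : List ℕ → List ℕ,
    θ [] = [] ∧
    (∀ p, IsVertex S p → IsVertex T (θ p)) ∧
    (∀ a p q, Edge S a p q → Edge T a (θ p) (θ q)) ∧
    (∀ p, IsPoint S p → IsPoint T (θ p))

/-- A homomorphism of the pointed tree `T`, viewed as a relational structure,
into the relational structure `(X, f)`, mapping the root of `T` to `x` and
the point of `T` to `y`. -/
def HomInto {X : Type} (T : PreTree α) (f : α → X → X → Prop) (x y : X) : Prop :=
  ∃ θ : List ℕ → X,
    θ [] = x ∧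
    (∀ a p q, Edge T a p q → f a (θ p) (θ q)) ∧
    (∀ p, IsPoint T p → θ p = y)


end PreTree

namespace FreeKAD

/-- Terms of the signature `{∘, 1, D}`. -/
inductive Term1 (α : Type) : Type
  | var : α → Term1 α
  | one : Term1 α
  | comp : Term1 α → Term1 α → Term1 α
  | dom : Term1 α → Term1 α

/-- Terms of the signature `{∘, +, *, 0, 1, D}` (Kleene algebra with domain). -/
inductive TermK (α : Type) : Type
  | var : α → TermK α
  | zero : TermK α
  | one : TermK α
  | comp : TermK α → TermK α → TermK α
  | add : TermK α → TermK α → TermK α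
  | star : TermK α → TermK α
  | dom : TermK α → TermK α

variable {α : Type}

/-- The relational interpretation of a `{∘, 1, D}`-term over a set `X`,
under an assignment `f` of binary relations on `X` to the variables. -/
def rinterp1 {X : Type} (f : α → X → X → Prop) : Term1 α → X → X → Prop
  | .var a => f a
  | .one => fun x y => x = y
  | .comp s t => fun x y => ∃ z, rinterp1 f s x z ∧ rinterp1 f t z y
  | .dom s => fun x y => x = y ∧ ∃ z, rinterp1 f s x z

/-- The relational interpretation of a `{∘, +, *, 0, 1, D}`-term over a set `X`,
under an assignment `f` of binary relations on `X` to the variables. -/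
def rinterpK {X : Type} (f : α → X → X → Prop) : TermK α → X → X → Prop
  | .var a => f a
  | .zero => fun _ _ => False
  | .one => fun x y => x = y
  | .comp s t => fun x y => ∃ z, rinterpK f s x z ∧ rinterpK f t z y
  | .add s t => fun x y => rinterpK f s x y ∨ rinterpK f t x y
  | .star s => Relation.ReflTransGen (rinterpK f s)
  | .dom s => fun x y => x = y ∧ ∃ z, rinterpK f s x z

/-- Composition of binary relations. -/
def relComp {X : Type} (R S : X → X → Prop) : X → X → Prop :=
  fun x y => ∃ z, R x z ∧ S z y

/-- Union of binary relations. -/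
def relUnion {X : Type} (R S : X → X → Prop) : X → X → Prop :=
  fun x y => R x y ∨ S x y

/-- The domain operation on binary relations. -/
def relDom {X : Type} (R : X → X → Prop) : X → X → Prop :=
  fun x y => x = y ∧ ∃ z, R x z

/-- The identity relation. -/
def relId {X : Type} : X → X → Prop := fun x y => x = y

/-- The empty relation. -/
def relEmpty {X : Type} : X → X → Prop := fun _ _ => False

end FreeKAD

namespace FreeKAD

open PreTree

variable {α : Type}

/-- The single-tree interpretation of `{∘, 1, D}`-terms. -/
noncomputable def interp1 : Term1 α → PreTree α
  | .var a => arrow a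
  | .one => trivialTree
  | .comp s t => concat (interp1 s) (interp1 t)
  | .dom s => domTree (interp1 s)

/-- The set of `≤`-maximal elements of a set of trees. -/
def maximalSet (K : Set (PreTree α)) : Set (PreTree α) :=
  {T | T ∈ K ∧ ∀ S ∈ K, le T S → le S T}

/-- Elementwise lifting of pointed tree concatenation to sets of trees. -/
def liftComp (K L : Set (PreTree α)) : Set (PreTree α) :=
  {U | ∃ T ∈ K, ∃ S ∈ L, U = concat T S}

/-- Elementwise lifting of the domain operation to sets of trees. -/
def liftDom (K : Set (PreTree α)) : Set (PreTree α) :=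
  {U | ∃ T ∈ K, U = domTree T}

/-- Iterated lifted concatenation: `K^0 = {trivial}`, `K^(i+1) = K^i ∘ K`. -/
def powC (K : Set (PreTree α)) : ℕ → Set (PreTree α)
  | 0 => {trivialTree}
  | i + 1 => liftComp (powC K i) K

/-- The standard tree interpretation of `{∘, +, *, 0, 1, D}`-terms. -/
def sinterp : TermK α → Set (PreTree α)
  | .var a => {arrow a}
  | .zero => ∅
  | .one => {trivialTree}
  | .comp s t => maximalSet (liftComp (sinterp s) (sinterp t))
  | .add s t => maximalSet (sinterp s ∪ sinterp t)
  | .star s => maximalSet (⋃ i : ℕ, powC (sinterp s) (i + 1))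
  | .dom s => maximalSet (liftDom (sinterp s))

/-- Equality of sets of trees, with trees compared as (hereditarily finite) sets. -/
def SetEqv (K L : Set (PreTree α)) : Prop :=
  (∀ T ∈ K, ∃ S ∈ L, eqv T S) ∧ (∀ S ∈ L, ∃ T ∈ K, eqv T S)

/-- A set of reduced pointed trees is regular if it is the standard tree
interpretation of some `{∘, +, *, 0, 1, D}`-term. -/
def Regular (L : Set (PreTree α)) : Prop := ∃ t : TermK α, L = sinterp t

/-- The set of reduced trees lying `≤`-below some member of `L`. -/
def down (L : Set (PreTree α)) : Set (PreTree α) :=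
  {T | Reduced T ∧ ∃ S ∈ L, le T S}

end FreeKAD
namespace PreTree
variable {α : Type}

theorem le_iff (b₁ b₂ : Bool) (c₁ c₂ : List (α × PreTree α)) :
    le (node b₁ c₁) (node b₂ c₂) ↔
      (b₂ = true → b₁ = true) ∧
      ∀ q ∈ c₂, ∃ p, p ∈ c₁ ∧ p.1 = q.1 ∧ le p.2 q.2 := by
  rw [le]

theorem markCount_eq (b : Bool) (cs : List (α × PreTree α)) :
    markCount (node b cs) = (cond b 1 0) + (cs.map fun p => markCount p.2).sum := by
  rw [markCount, List.attach_map_val (l := cs) (f := fun p => markCount p.2)]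

open scoped Classical in
theorem reduce_eq (b : Bool) (cs : List (α × PreTree α)) :
    reduce (node b cs) =
      node b ((cs.map fun p => (p.1, reduce p.2)).filter fun q =>
        decide (∀ q' ∈ (cs.map fun p => (p.1, reduce p.2)),
          q'.1 = q.1 → le q'.2 q.2 → le q.2 q'.2)) := by
  rw [reduce]
  rw [List.attach_map_val (l := cs) (f := fun p => (p.1, reduce p.2))]

theorem unmark_eq (b : Bool) (cs : List (α × PreTree α)) :
    unmark (node b cs) = node false (cs.map fun p => (p.1, unmark p.2)) := by
  rw [unmark, List.attach_map_val (l := cs) (f := fun p => (p.1, unmark p.2))]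

theorem graft_eq (S : PreTree α) (b : Bool) (cs : List (α × PreTree α)) :
    graft S (node b cs) =
      if b then node S.mark (cs ++ S.children)
      else node b (cs.map fun p => (p.1, graft S p.2)) := by
  rw [graft, List.attach_map_val (l := cs) (f := fun p => (p.1, graft S p.2))]

end PreTree
namespace PreTree
variable {α : Type}

theorem le_refl : ∀ T : PreTree α, le T T
  | node b cs => by
    rw [le_iff]
    exact ⟨fun h => h, fun q hq => ⟨q, hq, rfl, le_refl q.2⟩⟩
termination_by T => sizeOf T
decreasing_by
  have h := List.sizeOf_lt_of_mem hq
  obtain ⟨qa, qt⟩ := q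
  simp at h ⊢
  omega

theorem le_trans : ∀ A B C : PreTree α, le A B → le B C → le A C
  | node a ca, node b cb, node c cc => by
    intro h1 h2
    rw [le_iff] at h1 h2 ⊢
    refine ⟨fun hc => h1.1 (h2.1 hc), fun q hq => ?_⟩
    obtain ⟨p, hp, hpq, hle⟩ := h2.2 q hq
    obtain ⟨r, hr, hrp, hle'⟩ := h1.2 p hp
    exact ⟨r, hr, hrp.trans hpq, le_trans r.2 p.2 q.2 hle' hle⟩
termination_by _ _ C => sizeOf C
decreasing_by
  have h := List.sizeOf_lt_of_mem hq
  obtain ⟨qa, qt⟩ := q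
  simp at h ⊢
  omega

theorem markCount_zero_iff : ∀ (T : PreTree α),
    markCount T = 0 ↔ (T.mark = false ∧ ∀ p ∈ T.children, markCount p.2 = 0) := by
  rintro ⟨b, cs⟩
  rw [markCount_eq]
  cases b
  · simp only [mark, children, cond, Nat.zero_add, List.sum_eq_zero_iff]
    constructor
    · intro h; exact ⟨by simp, fun p hp => h _ (List.mem_map_of_mem hp)⟩
    · rintro ⟨-, h⟩ x hx
      obtain ⟨p, hp, rfl⟩ := List.mem_map.1 hx
      exact h p hp
  · simp [mark]

theorem le_markCount_zero : ∀ A B : PreTree α, le A B → markCount A = 0 → markCount B = 0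
  | node a ca, node b cb => by
    intro hle h0
    rw [le_iff] at hle
    rw [markCount_zero_iff] at h0 ⊢
    simp only [mark, children] at h0 ⊢
    refine ⟨?_, fun q hq => ?_⟩
    · cases b with
      | false => rfl
      | true => exact absurd (hle.1 rfl) (by simp [h0.1])
    · obtain ⟨p, hp, _, hle'⟩ := hle.2 q hq
      exact le_markCount_zero p.2 q.2 hle' (h0.2 p hp)
termination_by _ B => sizeOf B
decreasing_by
  have h := List.sizeOf_lt_of_mem hq
  obtain ⟨qa, qt⟩ := q
  simp at h ⊢
  omega

def hom {X : Type} (f : α → X → X → Prop) (y : X) : PreTree α → X → Prop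
  | node b cs, x => (b = true → x = y) ∧ ∀ p ∈ cs, ∃ z, f p.1 x z ∧ hom f y p.2 z
termination_by T _ => sizeOf T
decreasing_by
  have h := List.sizeOf_lt_of_mem ‹p ∈ cs›
  obtain ⟨pa, pt⟩ := p
  simp at h ⊢
  omega

theorem hom_iff {X : Type} (f : α → X → X → Prop) (y : X) (b : Bool)
    (cs : List (α × PreTree α)) (x : X) :
    hom f y (node b cs) x ↔
      (b = true → x = y) ∧ ∀ p ∈ cs, ∃ z, f p.1 x z ∧ hom f y p.2 z := by
  rw [hom]

theorem hom_of_le {X : Type} (f : α → X → X → Prop) (y : X) :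
    ∀ (A B : PreTree α) (x : X), le A B → hom f y A x → hom f y B x
  | node a ca, node b cb, x => by
    intro hle hh
    rw [le_iff] at hle
    rw [hom_iff] at hh ⊢
    refine ⟨fun hb => hh.1 (hle.1 hb), fun q hq => ?_⟩
    obtain ⟨p, hp, hpq, hle'⟩ := hle.2 q hq
    obtain ⟨z, hz, hhz⟩ := hh.2 p hp
    exact ⟨z, hpq ▸ hz, hom_of_le f y p.2 q.2 z hle' hhz⟩
termination_by _ B _ => sizeOf B
decreasing_by
  have h := List.sizeOf_lt_of_mem hq
  obtain ⟨qa, qt⟩ := q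
  simp at h ⊢
  omega

theorem hom_markless {X : Type} (f : α → X → X → Prop) (y y' : X) :
    ∀ (T : PreTree α) (x : X), markCount T = 0 → hom f y T x → hom f y' T x
  | node b cs, x => by
    intro h0 hh
    rw [markCount_zero_iff] at h0
    simp only [mark, children] at h0
    rw [hom_iff] at hh ⊢
    refine ⟨fun hb => absurd hb (by simp [h0.1]), fun p hp => ?_⟩
    obtain ⟨z, hz, hhz⟩ := hh.2 p hp
    exact ⟨z, hz, hom_markless f y y' p.2 z (h0.2 p hp) hhz⟩
termination_by T _ => sizeOf T
decreasing_by
  have h := List.sizeOf_lt_of_mem hp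
  obtain ⟨pa, pt⟩ := p
  simp at h ⊢
  omega

end PreTree
namespace PreTree
variable {α : Type}

theorem sum_map_le {β : Type} (l : List β) (f g : β → ℕ) (h : ∀ x ∈ l, f x ≤ g x) :
    (l.map f).sum ≤ (l.map g).sum := by
  induction l with
  | nil => simp
  | cons a t ih =>
    simp only [List.map_cons, List.sum_cons]
    exact Nat.add_le_add (h a (by simp)) (ih fun x hx => h x (by simp [hx]))

theorem countP_lt {β : Type} {l : List β} {p q : β → Bool}
    (hpq : ∀ x ∈ l, p x → q x) (x : β) (hx : x ∈ l) (hqx : q x = true)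
    (hpx : ¬ p x = true) : l.countP p < l.countP q := by
  induction l with
  | nil => simp at hx
  | cons a t ih =>
    rw [List.countP_cons, List.countP_cons]
    rcases List.mem_cons.1 hx with rfl | hx'
    · have : t.countP p ≤ t.countP q :=
        List.countP_mono_left fun z hz => hpq z (by simp [hz])
      simp [hqx, hpx]; omega
    · have h1 := ih (fun z hz => hpq z (by simp [hz])) hx'
      have : (if p a = true then 1 else 0) ≤ (if q a = true then 1 else 0) := by
        by_cases hpa : p a = true
        · simp [hpa, hpq a (by simp) hpa]
        · simp [hpa]
      omega

open scoped Classical in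
theorem exists_min (cs' : List (α × PreTree α)) :
    ∀ q ∈ cs', ∃ m ∈ cs', m.1 = q.1 ∧ le m.2 q.2 ∧
      (∀ q' ∈ cs', q'.1 = m.1 → le q'.2 m.2 → le m.2 q'.2) := by
  suffices H : ∀ (n : ℕ) (q), q ∈ cs' →
      (cs'.countP fun r => decide (r.1 = q.1 ∧ le r.2 q.2 ∧ ¬ le q.2 r.2)) ≤ n →
      ∃ m ∈ cs', m.1 = q.1 ∧ le m.2 q.2 ∧
        (∀ q' ∈ cs', q'.1 = m.1 → le q'.2 m.2 → le m.2 q'.2) by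
    intro q hq
    exact H _ q hq (Nat.le_refl _)
  intro n
  induction n with
  | zero =>
    intro q hq hcnt
    refine ⟨q, hq, rfl, le_refl q.2, fun q' hq' hlab hle => ?_⟩
    by_contra hnot
    have : (cs'.countP fun r => decide (r.1 = q.1 ∧ le r.2 q.2 ∧ ¬ le q.2 r.2)) ≥ 1 := by
      have : q' ∈ cs'.filter fun r => decide (r.1 = q.1 ∧ le r.2 q.2 ∧ ¬ le q.2 r.2) :=
        List.mem_filter.2 ⟨hq', by simp only [decide_eq_true_eq]; exact ⟨hlab, hle, hnot⟩⟩
      have h2 := List.length_pos_iff.2 (List.ne_nil_of_mem this)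
      rwa [← List.countP_eq_length_filter] at h2
    omega
  | succ n ih =>
    intro q hq hcnt
    by_cases hP : ∀ q' ∈ cs', q'.1 = q.1 → le q'.2 q.2 → le q.2 q'.2
    · exact ⟨q, hq, rfl, le_refl q.2, hP⟩
    · push_neg at hP
      obtain ⟨q', hq', hlab, hle, hnot⟩ := hP
      have hlt : (cs'.countP fun r => decide (r.1 = q'.1 ∧ le r.2 q'.2 ∧ ¬ le q'.2 r.2))
          < (cs'.countP fun r => decide (r.1 = q.1 ∧ le r.2 q.2 ∧ ¬ le q.2 r.2)) := by
        refine countP_lt (fun r hr h => ?_) q' hq' ?_ ?_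
        · simp only [decide_eq_true_eq] at h ⊢
          obtain ⟨h1, h2, h3⟩ := h
          refine ⟨h1.trans hlab, le_trans _ _ _ h2 hle, fun hc => h3 ?_⟩
          exact le_trans _ _ _ hle hc
        · simp only [decide_eq_true_eq]
          exact ⟨hlab, hle, hnot⟩
        · simp only [decide_eq_true_eq]
          rintro ⟨-, -, h3⟩
          exact h3 (le_refl _)
      obtain ⟨m, hm, hlab', hle', hmin⟩ := ih q' hq' (by omega)
      exact ⟨m, hm, hlab'.trans hlab, le_trans _ _ _ hle' hle, hmin⟩

open scoped Classical in
theorem mem_reduce_children_of_mem {b : Bool} {cs : List (α × PreTree α)} {p : α × PreTree α}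
    (hp : p ∈ cs) :
    ∃ m ∈ (reduce (node b cs)).children, m.1 = p.1 ∧ le m.2 (reduce p.2) := by
  classical
  rw [reduce_eq]
  set cs' := cs.map fun p => (p.1, reduce p.2) with hcs'
  obtain ⟨m, hm, hlab, hle, hmin⟩ :=
    exists_min cs' (p.1, reduce p.2) (by rw [hcs']; exact List.mem_map_of_mem hp)
  refine ⟨m, ?_, hlab, hle⟩
  simp only [children]
  refine List.mem_filter.2 ⟨hm, ?_⟩
  simp only [decide_eq_true_eq]
  intro q' hq' h1 h2
  exact hmin q' hq' h1 h2

theorem hom_reduce {X : Type} (f : α → X → X → Prop) (y : X) :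
    ∀ (T : PreTree α) (x : X), hom f y (reduce T) x ↔ hom f y T x
  | node b cs, x => by
    classical
    constructor
    · intro hh
      rw [reduce_eq, hom_iff] at hh
      rw [hom_iff]
      refine ⟨hh.1, fun p hp => ?_⟩
      obtain ⟨m, hm, hlab, hle⟩ := mem_reduce_children_of_mem (b := b) hp
      rw [reduce_eq] at hm
      simp only [children] at hm
      obtain ⟨z, hz, hhz⟩ := hh.2 m hm
      refine ⟨z, hlab ▸ hz, ?_⟩
      exact (hom_reduce f y p.2 z).1 (hom_of_le f y m.2 (reduce p.2) z hle hhz)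
    · intro hh
      rw [hom_iff] at hh
      rw [reduce_eq, hom_iff]
      refine ⟨hh.1, fun q hq => ?_⟩
      have hq' := (List.mem_filter.1 hq).1
      obtain ⟨p, hp, rfl⟩ := List.mem_map.1 hq'
      obtain ⟨z, hz, hhz⟩ := hh.2 p hp
      exact ⟨z, hz, (hom_reduce f y p.2 z).2 hhz⟩
termination_by T _ => sizeOf T
decreasing_by
  all_goals
    have h := List.sizeOf_lt_of_mem hp
    obtain ⟨pa, pt⟩ := p
    simp at h ⊢
    omega

theorem markCount_reduce_le : ∀ T : PreTree α, markCount (reduce T) ≤ markCount T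
  | node b cs => by
    classical
    rw [reduce_eq, markCount_eq, markCount_eq]
    refine Nat.add_le_add_left ?_ _
    calc ((List.filter _ (cs.map fun p => (p.1, reduce p.2))).map fun p => markCount p.2).sum
        ≤ ((cs.map fun p => (p.1, reduce p.2)).map fun p => markCount p.2).sum := by
          refine List.Sublist.sum_le_sum ?_ (by simp)
          exact List.Sublist.map _ (List.filter_sublist)
      _ = (cs.map fun p => markCount (reduce p.2)).sum := by rw [List.map_map]; rfl
      _ ≤ (cs.map fun p => markCount p.2).sum :=
          sum_map_le _ _ _ fun p hp => markCount_reduce_le p.2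
termination_by T => sizeOf T
decreasing_by
  have h := List.sizeOf_lt_of_mem hp
  obtain ⟨pa, pt⟩ := p
  simp at h ⊢
  omega

end PreTree
namespace PreTree
variable {α : Type}

theorem sum_map_exists_one {β : Type} {g : β → ℕ} {l : List β}
    (h : (l.map g).sum = 1) : ∃ p ∈ l, g p = 1 := by
  induction l with
  | nil => simp at h
  | cons a t ih =>
    simp only [List.map_cons, List.sum_cons] at h
    rcases Nat.eq_zero_or_pos (g a) with h0 | h1
    · obtain ⟨p, hp, hg⟩ := ih (by omega)
      exact ⟨p, by simp [hp], hg⟩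
    · exact ⟨a, by simp, by omega⟩

theorem sum_map_one_unique {β : Type} {g : β → ℕ} {l : List β}
    (h : (l.map g).sum = 1) {p q : β} (hp : p ∈ l) (hq : q ∈ l)
    (hgp : g p = 1) (hgq : g q = 1) : p = q := by
  induction l with
  | nil => simp at hp
  | cons a t ih =>
    simp only [List.map_cons, List.sum_cons] at h
    rcases List.mem_cons.1 hp with rfl | hp' <;> rcases List.mem_cons.1 hq with rfl | hq'
    · rfl
    · have : g q ≤ (t.map g).sum := List.single_le_sum (by simp) _ (List.mem_map_of_mem hq')
      omega
    · have : g p ≤ (t.map g).sum := List.single_le_sum (by simp) _ (List.mem_map_of_mem hp')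
      omega
    · have : g p ≤ (t.map g).sum := List.single_le_sum (by simp) _ (List.mem_map_of_mem hp')
      exact ih (by omega) hp' hq'

theorem node_mark_children : ∀ T : PreTree α, node T.mark T.children = T
  | node _ _ => rfl

theorem markCount_child_le {b : Bool} {cs : List (α × PreTree α)} {p : α × PreTree α}
    (hp : p ∈ cs) : markCount p.2 ≤ markCount (node b cs) := by
  rw [markCount_eq]
  have : markCount p.2 ≤ (cs.map fun p => markCount p.2).sum :=
    List.single_le_sum (by simp) _ (List.mem_map_of_mem hp)
  omega

theorem markCount_unmark : ∀ T : PreTree α, markCount (unmark T) = 0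
  | node b cs => by
    rw [unmark_eq, markCount_eq]
    simp only [cond_false, Nat.zero_add, List.map_map, List.sum_eq_zero_iff]
    intro x hx
    obtain ⟨p, hp, rfl⟩ := List.mem_map.1 hx
    exact markCount_unmark p.2
termination_by T => sizeOf T
decreasing_by
  have h := List.sizeOf_lt_of_mem hp
  obtain ⟨pa, pt⟩ := p
  simp at h ⊢
  omega

theorem markCount_reduce_eq : ∀ T : PreTree α, markCount T ≤ 1 →
    markCount (reduce T) = markCount T
  | node b cs => by
    classical
    intro hle1
    have hred := markCount_reduce_le (node b cs)
    rcases Nat.lt_or_ge (markCount (node b cs)) 1 with h0 | h1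
    · -- count zero
      have h0 : markCount (node b cs) = 0 := by omega
      rw [h0]
      rw [markCount_zero_iff] at h0 ⊢
      rw [reduce_eq]
      simp only [mark, children] at h0 ⊢
      refine ⟨h0.1, fun q hq => ?_⟩
      obtain ⟨p, hp, rfl⟩ := List.mem_map.1 (List.mem_filter.1 hq).1
      have := markCount_reduce_eq p.2 (by rw [h0.2 p hp]; exact Nat.zero_le _)
      rw [this, h0.2 p hp]
    · -- count one
      have h1 : markCount (node b cs) = 1 := by omega
      rw [h1]
      rw [markCount_eq] at h1
      cases b with
      | true =>
        simp only [cond_true] at h1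
        have hz : ∀ p ∈ cs, markCount p.2 = 0 := by
          intro p hp
          have := List.single_le_sum (l := cs.map fun p => markCount p.2) (by simp) _
            (List.mem_map_of_mem hp)
          omega
        rw [reduce_eq, markCount_eq]
        simp only [cond_true]
        have : ∀ x ∈ (((cs.map fun p => (p.1, reduce p.2)).filter fun q =>
            decide (∀ q' ∈ (cs.map fun p => (p.1, reduce p.2)),
              q'.1 = q.1 → le q'.2 q.2 → le q.2 q'.2)).map fun p => markCount p.2), x = 0 := by
          intro x hx
          obtain ⟨q, hq, rfl⟩ := List.mem_map.1 hx
          obtain ⟨p, hp, rfl⟩ := List.mem_map.1 (List.mem_filter.1 hq).1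
          have := markCount_reduce_eq p.2 (by rw [hz p hp]; exact Nat.zero_le _)
          rw [this, hz p hp]
        rw [List.sum_eq_zero_iff.2 this]
        rfl
      | false =>
        simp only [cond_false, Nat.zero_add] at h1
        obtain ⟨p₀, hp₀, hg₀⟩ := sum_map_exists_one h1
        obtain ⟨m, hm, hlab, hlem⟩ := mem_reduce_children_of_mem (b := false) hp₀
        have hmr : markCount (reduce p₀.2) = 1 := by
          rw [markCount_reduce_eq p₀.2 (by rw [hg₀]), hg₀]
        have hmpos : markCount m.2 ≠ 0 := by
          intro hc
          rw [le_markCount_zero _ _ hlem hc] at hmr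
          omega
        have hge : 1 ≤ markCount (reduce (node false cs)) := by
          have := markCount_child_le (b := (reduce (node false cs)).mark) (cs := (reduce (node false cs)).children) hm
          rw [node_mark_children] at this
          omega
        have hle' : markCount (reduce (node false cs)) ≤ 1 := by
          rw [markCount_eq, h1] at hred
          simpa using hred
        omega
termination_by T => sizeOf T
decreasing_by
  all_goals first
    | (have h := List.sizeOf_lt_of_mem hp
       obtain ⟨pa, pt⟩ := p
       simp at h ⊢
       omega)
    | (have h := List.sizeOf_lt_of_mem hp₀
       obtain ⟨pa, pt⟩ := p₀
       simp at h ⊢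
       omega)

end PreTree
namespace PreTree
variable {α : Type}

theorem markCount_graft (S : PreTree α) : ∀ T : PreTree α, markCount T ≤ 1 →
    markCount (graft S T) = markCount S * markCount T
  | node b cs => by
    intro hle1
    rw [graft_eq]
    cases b with
    | true =>
      rw [if_pos rfl]
      rw [markCount_eq] at hle1 ⊢
      simp only [cond_true] at hle1
      have hz : (cs.map fun p => markCount p.2).sum = 0 := by omega
      rw [markCount_eq true cs]
      simp only [cond_true, List.map_append, List.sum_append, hz]
      conv_rhs => rw [← node_mark_children S, markCount_eq]
      ring
    | false =>
      rw [if_neg (by simp)]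
      rw [markCount_eq, markCount_eq false cs]
      simp only [cond_false, Nat.zero_add, List.map_map]
      rw [markCount_eq] at hle1
      simp only [cond_false, Nat.zero_add] at hle1
      have : ∀ p ∈ cs, ((fun p : α × PreTree α => markCount p.2) ∘
          fun p : α × PreTree α => (p.1, graft S p.2)) p
          = markCount S * markCount p.2 := by
        intro p hp
        have hc : markCount p.2 ≤ 1 := by
          have : markCount p.2 ≤ (cs.map fun p => markCount p.2).sum :=
            List.single_le_sum (by simp) _ (List.mem_map_of_mem hp)
          omega
        exact markCount_graft S p.2 hc
      rw [List.map_congr_left this, ← List.sum_map_mul_left]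
termination_by T => sizeOf T
decreasing_by
  have h := List.sizeOf_lt_of_mem hp
  obtain ⟨pa, pt⟩ := p
  simp at h ⊢
  omega

theorem hom_graft_zero {X : Type} (f : α → X → X → Prop) (y : X) (S : PreTree α) :
    ∀ (T : PreTree α) (x : X), markCount T = 0 →
      (hom f y (graft S T) x ↔ hom f y T x)
  | node b cs, x => by
    intro h0
    rw [markCount_zero_iff] at h0
    simp only [mark, children] at h0
    rw [graft_eq, if_neg (by simp [h0.1]), h0.1, hom_iff, hom_iff]
    constructor
    · rintro ⟨h1, h2⟩
      refine ⟨h1, fun p hp => ?_⟩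
      obtain ⟨z, hz, hhz⟩ := h2 (p.1, graft S p.2) (List.mem_map_of_mem hp)
      exact ⟨z, hz, (hom_graft_zero f y S p.2 z (h0.2 p hp)).1 hhz⟩
    · rintro ⟨h1, h2⟩
      refine ⟨h1, fun q hq => ?_⟩
      obtain ⟨p, hp, rfl⟩ := List.mem_map.1 hq
      obtain ⟨z, hz, hhz⟩ := h2 p hp
      exact ⟨z, hz, (hom_graft_zero f y S p.2 z (h0.2 p hp)).2 hhz⟩
termination_by T _ => sizeOf T
decreasing_by
  all_goals first
    | (have h := List.sizeOf_lt_of_mem hp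
       obtain ⟨pa, pt⟩ := p
       simp at h ⊢
       omega)

theorem hom_graft {X : Type} (f : α → X → X → Prop) (y : X) (S : PreTree α) :
    ∀ (T : PreTree α) (x : X), markCount T = 1 →
      (hom f y (graft S T) x ↔ ∃ z, hom f z T x ∧ hom f y S z)
  | node b cs, x => by
    intro h1
    rw [markCount_eq] at h1
    obtain ⟨sb, scs⟩ := S
    rw [graft_eq]
    cases b with
    | true =>
      simp only [cond_true] at h1
      have hz : ∀ p ∈ cs, markCount p.2 = 0 := by
        intro p hp
        have : markCount p.2 ≤ (cs.map fun p => markCount p.2).sum :=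
          List.single_le_sum (by simp) _ (List.mem_map_of_mem hp)
        omega
      rw [if_pos rfl]
      simp only [mark, children]
      rw [hom_iff]
      constructor
      · rintro ⟨hm, hc⟩
        refine ⟨x, ?_, ?_⟩
        · rw [hom_iff]
          refine ⟨fun _ => rfl, fun p hp => ?_⟩
          obtain ⟨z, hz', hhz⟩ := hc p (by simp [hp])
          exact ⟨z, hz', hom_markless f y x p.2 z (hz p hp) hhz⟩
        · rw [hom_iff]
          refine ⟨hm, fun p hp => hc p (by simp [hp])⟩
      · rintro ⟨z, hT, hS⟩
        rw [hom_iff] at hT hS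
        have hxz : x = z := hT.1 rfl
        subst hxz
        refine ⟨hS.1, fun p hp => ?_⟩
        rcases List.mem_append.1 hp with hp' | hp'
        · obtain ⟨z', hz', hhz⟩ := hT.2 p hp'
          exact ⟨z', hz', hom_markless f x y p.2 z' (hz p hp') hhz⟩
        · exact hS.2 p hp'
    | false =>
      simp only [cond_false, Nat.zero_add] at h1
      rw [if_neg (by simp)]
      rw [hom_iff]
      constructor
      · rintro ⟨-, hc⟩
        obtain ⟨p₀, hp₀, hg₀⟩ := sum_map_exists_one h1
        obtain ⟨w₀, hw₀, hhw₀⟩ := hc (p₀.1, graft (node sb scs) p₀.2) (List.mem_map_of_mem hp₀)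
        obtain ⟨z, hz, hSz⟩ := (hom_graft f y (node sb scs) p₀.2 w₀ hg₀).1 hhw₀
        refine ⟨z, ?_, hSz⟩
        rw [hom_iff]
        refine ⟨by simp, fun p hp => ?_⟩
        have hple : markCount p.2 ≤ 1 := by
          have : markCount p.2 ≤ (cs.map fun p => markCount p.2).sum :=
            List.single_le_sum (by simp) _ (List.mem_map_of_mem hp)
          omega
        rcases Nat.lt_or_ge (markCount p.2) 1 with hc0 | hc1
        · have hc0 : markCount p.2 = 0 := by omega
          obtain ⟨w, hw, hhw⟩ := hc (p.1, graft (node sb scs) p.2) (List.mem_map_of_mem hp)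
          have := (hom_graft_zero f y (node sb scs) p.2 w hc0).1 hhw
          exact ⟨w, hw, hom_markless f y z p.2 w hc0 this⟩
        · have hc1 : markCount p.2 = 1 := by omega
          have hpp : p = p₀ := sum_map_one_unique h1 hp hp₀ hc1 hg₀
          subst hpp
          exact ⟨w₀, hw₀, hz⟩
      · rintro ⟨z, hT, hS⟩
        rw [hom_iff] at hT
        refine ⟨by simp, fun q hq => ?_⟩
        obtain ⟨p, hp, rfl⟩ := List.mem_map.1 hq
        obtain ⟨w, hw, hhw⟩ := hT.2 p hp
        have hple : markCount p.2 ≤ 1 := by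
          have : markCount p.2 ≤ (cs.map fun p => markCount p.2).sum :=
            List.single_le_sum (by simp) _ (List.mem_map_of_mem hp)
          omega
        rcases Nat.lt_or_ge (markCount p.2) 1 with hc0 | hc1
        · have hc0 : markCount p.2 = 0 := by omega
          have := hom_markless f z y p.2 w hc0 hhw
          exact ⟨w, hw, (hom_graft_zero f y (node sb scs) p.2 w hc0).2 this⟩
        · have hc1 : markCount p.2 = 1 := by omega
          exact ⟨w, hw, (hom_graft f y (node sb scs) p.2 w hc1).2 ⟨z, hhw, hS⟩⟩
termination_by T _ => sizeOf T
decreasing_by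
  all_goals first
    | (have h := List.sizeOf_lt_of_mem hp
       obtain ⟨pa, pt⟩ := p
       simp at h ⊢
       omega)
    | (have h := List.sizeOf_lt_of_mem hp₀
       obtain ⟨pa, pt⟩ := p₀
       simp at h ⊢
       omega)

end PreTree
namespace PreTree
variable {α : Type}

theorem hom_unmark_of {X : Type} (f : α → X → X → Prop) (y z : X) :
    ∀ (T : PreTree α) (x : X), hom f z T x → hom f y (unmark T) x
  | node b cs, x => by
    intro hh
    rw [hom_iff] at hh
    rw [unmark_eq, hom_iff]
    refine ⟨by simp, fun q hq => ?_⟩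
    obtain ⟨p, hp, rfl⟩ := List.mem_map.1 hq
    obtain ⟨w, hw, hhw⟩ := hh.2 p hp
    exact ⟨w, hw, hom_unmark_of f y z p.2 w hhw⟩
termination_by T _ => sizeOf T
decreasing_by
  have h := List.sizeOf_lt_of_mem hp
  obtain ⟨pa, pt⟩ := p
  simp at h ⊢
  omega

theorem hom_unmark_zero {X : Type} (f : α → X → X → Prop) (y z : X) :
    ∀ (T : PreTree α) (x : X), markCount T = 0 → hom f y (unmark T) x → hom f z T x
  | node b cs, x => by
    intro h0 hh
    rw [markCount_zero_iff] at h0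
    simp only [mark, children] at h0
    rw [unmark_eq, hom_iff] at hh
    rw [hom_iff]
    refine ⟨fun hb => absurd hb (by simp [h0.1]), fun p hp => ?_⟩
    obtain ⟨w, hw, hhw⟩ := hh.2 (p.1, unmark p.2) (List.mem_map_of_mem hp)
    exact ⟨w, hw, hom_unmark_zero f y z p.2 w (h0.2 p hp) hhw⟩
termination_by T _ => sizeOf T
decreasing_by
  have h := List.sizeOf_lt_of_mem hp
  obtain ⟨pa, pt⟩ := p
  simp at h ⊢
  omega

theorem hom_unmark_extract {X : Type} (f : α → X → X → Prop) (y : X) :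
    ∀ (T : PreTree α) (x : X), markCount T = 1 → hom f y (unmark T) x →
      ∃ z, hom f z T x
  | node b cs, x => by
    intro h1 hh
    rw [markCount_eq] at h1
    rw [unmark_eq, hom_iff] at hh
    cases b with
    | true =>
      simp only [cond_true] at h1
      have hz : ∀ p ∈ cs, markCount p.2 = 0 := by
        intro p hp
        have : markCount p.2 ≤ (cs.map fun p => markCount p.2).sum :=
          List.single_le_sum (by simp) _ (List.mem_map_of_mem hp)
        omega
      refine ⟨x, ?_⟩
      rw [hom_iff]
      refine ⟨fun _ => rfl, fun p hp => ?_⟩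
      obtain ⟨w, hw, hhw⟩ := hh.2 (p.1, unmark p.2) (List.mem_map_of_mem hp)
      exact ⟨w, hw, hom_unmark_zero f y x p.2 w (hz p hp) hhw⟩
    | false =>
      simp only [cond_false, Nat.zero_add] at h1
      obtain ⟨p₀, hp₀, hg₀⟩ := sum_map_exists_one h1
      obtain ⟨w₀, hw₀, hhw₀⟩ := hh.2 (p₀.1, unmark p₀.2) (List.mem_map_of_mem hp₀)
      obtain ⟨z, hz⟩ := hom_unmark_extract f y p₀.2 w₀ hg₀ hhw₀
      refine ⟨z, ?_⟩
      rw [hom_iff]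
      refine ⟨by simp, fun p hp => ?_⟩
      have hple : markCount p.2 ≤ 1 := by
        have : markCount p.2 ≤ (cs.map fun p => markCount p.2).sum :=
          List.single_le_sum (by simp) _ (List.mem_map_of_mem hp)
        omega
      rcases Nat.lt_or_ge (markCount p.2) 1 with hc0 | hc1
      · have hc0 : markCount p.2 = 0 := by omega
        obtain ⟨w, hw, hhw⟩ := hh.2 (p.1, unmark p.2) (List.mem_map_of_mem hp)
        exact ⟨w, hw, hom_unmark_zero f y z p.2 w hc0 hhw⟩
      · have hc1 : markCount p.2 = 1 := by omega
        have hpp : p = p₀ := sum_map_one_unique h1 hp hp₀ hc1 hg₀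
        subst hpp
        exact ⟨w₀, hw₀, hz⟩
termination_by T _ => sizeOf T
decreasing_by
  all_goals first
    | (have h := List.sizeOf_lt_of_mem hp
       obtain ⟨pa, pt⟩ := p
       simp at h ⊢
       omega)
    | (have h := List.sizeOf_lt_of_mem hp₀
       obtain ⟨pa, pt⟩ := p₀
       simp at h ⊢
       omega)

theorem hom_pointAtRoot {X : Type} (f : α → X → X → Prop) (y : X)
    (T : PreTree α) (x : X) (h1 : markCount T = 1) :
    hom f y (pointAtRoot T) x ↔ (x = y ∧ ∃ z, hom f z T x) := by
  obtain ⟨b, cs⟩ := T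
  have hUc : (unmark (node b cs)).children = cs.map fun p => (p.1, unmark p.2) := by
    rw [unmark_eq]; rfl
  unfold pointAtRoot
  rw [hUc, hom_iff]
  constructor
  · rintro ⟨hm, hc⟩
    refine ⟨hm rfl, ?_⟩
    have hu : hom f y (unmark (node b cs)) x := by
      rw [unmark_eq, hom_iff]
      exact ⟨by simp, hc⟩
    exact hom_unmark_extract f y (node b cs) x h1 hu
  · rintro ⟨hxy, z, hz⟩
    have hu := hom_unmark_of f y z (node b cs) x hz
    rw [unmark_eq, hom_iff] at hu
    exact ⟨fun _ => hxy, hu.2⟩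

theorem markCount_pointAtRoot (T : PreTree α) : markCount (pointAtRoot T) = 1 := by
  obtain ⟨b, cs⟩ := T
  unfold pointAtRoot
  rw [unmark_eq]
  simp only [children]
  rw [markCount_eq]
  have : ((cs.map fun p => (p.1, unmark p.2)).map fun p : α × PreTree α => markCount p.2).sum
      = 0 := by
    rw [List.sum_eq_zero_iff]
    intro x hx
    obtain ⟨q, hq, rfl⟩ := List.mem_map.1 hx
    obtain ⟨p, hp, rfl⟩ := List.mem_map.1 hq
    exact markCount_unmark p.2
  rw [this]
  rfl

end PreTree
namespace PreTree
variable {α : Type}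

theorem reduce_idem : ∀ T : PreTree α, reduce (reduce T) = reduce T
  | node b cs => by
    classical
    conv_lhs => rw [reduce_eq b cs]
    set cs' := cs.map fun p => (p.1, reduce p.2) with hcs'
    set K := cs'.filter fun q =>
      decide (∀ q' ∈ cs', q'.1 = q.1 → le q'.2 q.2 → le q.2 q'.2) with hK
    have hKid : (K.map fun p => (p.1, reduce p.2)) = K := by
      have : ∀ q ∈ K, (fun p : α × PreTree α => (p.1, reduce p.2)) q = id q := by
        intro q hq
        have hq' : q ∈ cs' := (List.mem_filter.1 (hK ▸ hq)).1
        obtain ⟨p, hp, rfl⟩ := List.mem_map.1 (hcs' ▸ hq')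
        simp only [id]
        rw [reduce_idem p.2]
      rw [List.map_congr_left this, List.map_id]
    rw [reduce_eq, hKid]
    rw [reduce_eq b cs]
    congr 1
    rw [List.filter_eq_self]
    intro q hq
    simp only [decide_eq_true_eq]
    intro q' hq' hlab hle
    have hP := (List.mem_filter.1 (hK ▸ hq)).2
    simp only [decide_eq_true_eq] at hP
    exact hP q' ((List.mem_filter.1 (hK ▸ hq')).1) hlab hle
termination_by T => sizeOf T
decreasing_by
  have h := List.sizeOf_lt_of_mem hp
  obtain ⟨pa, pt⟩ := p
  simp at h ⊢
  omega

theorem reduced_children {b : Bool} {cs : List (α × PreTree α)}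
    (h : Reduced (node b cs)) :
    (∀ q ∈ cs, Reduced q.2) ∧
    (∀ q ∈ cs, ∀ q' ∈ cs, q'.1 = q.1 → le q'.2 q.2 → le q.2 q'.2) := by
  classical
  unfold Reduced at h
  rw [reduce_eq] at h
  have hcs : ((cs.map fun p => (p.1, reduce p.2)).filter fun q =>
      decide (∀ q' ∈ (cs.map fun p => (p.1, reduce p.2)),
        q'.1 = q.1 → le q'.2 q.2 → le q.2 q'.2)) = cs := by
    injection h
  constructor
  · intro q hq
    have hq1 : q ∈ cs.map fun p => (p.1, reduce p.2) :=
      (List.mem_filter.1 (hcs ▸ hq)).1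
    obtain ⟨p, hp, rfl⟩ := List.mem_map.1 hq1
    exact reduce_idem p.2
  · intro q hq q' hq' hlab hle
    have hP := (List.mem_filter.1 (hcs ▸ hq)).2
    simp only [decide_eq_true_eq] at hP
    exact hP q' ((List.mem_filter.1 (hcs ▸ hq')).1) hlab hle

theorem eqv_iff (b₁ b₂ : Bool) (c₁ c₂ : List (α × PreTree α)) :
    eqv (node b₁ c₁) (node b₂ c₂) ↔
      b₁ = b₂ ∧
      (∀ p, p ∈ c₁ → ∃ q, q ∈ c₂ ∧ p.1 = q.1 ∧ eqv p.2 q.2) ∧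
      (∀ q, q ∈ c₂ → ∃ p : {x // x ∈ c₁}, p.1.1 = q.1 ∧ eqv p.1.2 q.2) := by
  rw [eqv]

theorem eqv_of_le_le : ∀ A B : PreTree α,
    Reduced A → Reduced B → le A B → le B A → eqv A B
  | node b₁ c₁, node b₂ c₂ => by
    intro hrA hrB hAB hBA
    rw [le_iff] at hAB hBA
    rw [eqv_iff]
    obtain ⟨hA1, hA2⟩ := reduced_children hrA
    obtain ⟨hB1, hB2⟩ := reduced_children hrB
    refine ⟨by cases b₁ <;> cases b₂ <;> simp_all, ?_, ?_⟩
    · intro p hp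
      obtain ⟨q, hq, hq1, hq2⟩ := hBA.2 p hp
      obtain ⟨p', hp', hp'1, hp'2⟩ := hAB.2 q hq
      have h1 : le p'.2 p.2 := le_trans _ _ _ hp'2 hq2
      have h2 : le p.2 p'.2 := hA2 p hp p' hp' (by rw [hp'1, hq1]) h1
      have hpq : le p.2 q.2 := le_trans _ _ _ h2 hp'2
      exact ⟨q, hq, hq1.symm, eqv_of_le_le p.2 q.2 (hA1 p hp) (hB1 q hq) hpq hq2⟩
    · intro q hq
      obtain ⟨p, hp, hp1, hp2⟩ := hAB.2 q hq
      obtain ⟨q', hq', hq'1, hq'2⟩ := hBA.2 p hp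
      have h1 : le q'.2 q.2 := le_trans _ _ _ hq'2 hp2
      have h2 : le q.2 q'.2 := hB2 q hq q' hq' (by rw [hq'1, hp1]) h1
      have hqp : le q.2 p.2 := le_trans _ _ _ h2 hq'2
      exact ⟨⟨p, hp⟩, hp1, eqv_of_le_le p.2 q.2 (hA1 p hp) (hB1 q hq) hp2 hqp⟩
termination_by A _ => sizeOf A
decreasing_by
  all_goals
    have h := List.sizeOf_lt_of_mem hp
    obtain ⟨pa, pt⟩ := p
    simp at h ⊢
    omega

/-- The canonical relational structure on trees. -/
def childRel : α → PreTree α → PreTree α → Prop :=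
  fun a U V => (a, V) ∈ U.children

theorem hom_self_markless (y : PreTree α) :
    ∀ T : PreTree α, markCount T = 0 → hom childRel y T T
  | node b cs => by
    intro h0
    rw [markCount_zero_iff] at h0
    simp only [mark, children] at h0
    rw [hom_iff]
    refine ⟨fun hb => absurd hb (by simp [h0.1]), fun p hp => ?_⟩
    refine ⟨p.2, ?_, hom_self_markless y p.2 (h0.2 p hp)⟩
    show (p.1, p.2) ∈ children (node b cs)
    exact hp
termination_by T => sizeOf T
decreasing_by
  have h := List.sizeOf_lt_of_mem hp
  obtain ⟨pa, pt⟩ := p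
  simp at h ⊢
  omega

theorem exists_point_hom : ∀ T : PreTree α, markCount T = 1 →
    ∃ y : PreTree α, y.mark = true ∧ hom childRel y T T
  | node b cs => by
    intro h1
    rw [markCount_eq] at h1
    cases b with
    | true =>
      simp only [cond_true] at h1
      have hz : ∀ p ∈ cs, markCount p.2 = 0 := by
        intro p hp
        have : markCount p.2 ≤ (cs.map fun p => markCount p.2).sum :=
          List.single_le_sum (by simp) _ (List.mem_map_of_mem hp)
        omega
      refine ⟨node true cs, rfl, ?_⟩
      rw [hom_iff]
      refine ⟨fun _ => rfl, fun p hp => ?_⟩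
      refine ⟨p.2, ?_, hom_self_markless _ p.2 (hz p hp)⟩
      show (p.1, p.2) ∈ children (node true cs)
      exact hp
    | false =>
      simp only [cond_false, Nat.zero_add] at h1
      obtain ⟨p₀, hp₀, hg₀⟩ := sum_map_exists_one h1
      obtain ⟨y, hy, hyh⟩ := exists_point_hom p₀.2 hg₀
      refine ⟨y, hy, ?_⟩
      rw [hom_iff]
      refine ⟨by simp, fun p hp => ?_⟩
      refine ⟨p.2, ?_, ?_⟩
      · show (p.1, p.2) ∈ children (node false cs)
        exact hp
      · have hple : markCount p.2 ≤ 1 := by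
          have : markCount p.2 ≤ (cs.map fun p => markCount p.2).sum :=
            List.single_le_sum (by simp) _ (List.mem_map_of_mem hp)
          omega
        rcases Nat.lt_or_ge (markCount p.2) 1 with hc0 | hc1
        · exact hom_self_markless y p.2 (by omega)
        · have hc1 : markCount p.2 = 1 := by omega
          have hpp : p = p₀ := sum_map_one_unique h1 hp hp₀ hc1 hg₀
          subst hpp
          exact hyh
termination_by T => sizeOf T
decreasing_by
  all_goals first
    | (have h := List.sizeOf_lt_of_mem hp
       obtain ⟨pa, pt⟩ := p
       simp at h ⊢
       omega)
    | (have h := List.sizeOf_lt_of_mem hp₀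
       obtain ⟨pa, pt⟩ := p₀
       simp at h ⊢
       omega)

theorem hom_to_le (y : PreTree α) (hy : y.mark = true) :
    ∀ A U : PreTree α, hom childRel y A U → le U A
  | node a ca, node u cu => by
    intro hh
    rw [hom_iff] at hh
    rw [le_iff]
    constructor
    · intro ha
      have h2 : (node u cu).mark = true := by rw [hh.1 ha]; exact hy
      simpa [mark] using h2
    · intro q hq
      obtain ⟨z, hz, hhz⟩ := hh.2 q hq
      have hz' : (q.1, z) ∈ cu := hz
      exact ⟨(q.1, z), hz', rfl, hom_to_le y hy q.2 z hhz⟩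
termination_by _ U => sizeOf U
decreasing_by
  have h := List.sizeOf_lt_of_mem hz'
  simp at h ⊢
  omega

end PreTree
namespace PreTree
variable {α : Type}

theorem markCount_trivial : markCount (trivialTree : PreTree α) = 1 := by
  rw [trivialTree, markCount_eq]
  rfl

theorem markCount_arrow (a : α) : markCount (arrow a) = 1 := by
  rw [arrow, markCount_eq]
  simp [markCount_eq]

theorem reduce_trivial : reduce (trivialTree : PreTree α) = trivialTree := by
  rw [trivialTree, reduce_eq]
  rfl

theorem reduce_node_true_nil : reduce (node true [] : PreTree α) = node true [] := by
  rw [reduce_eq]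
  rfl

theorem reduce_arrow (a : α) : reduce (arrow a) = arrow a := by
  classical
  rw [arrow, reduce_eq]
  simp only [List.map_cons, List.map_nil, reduce_node_true_nil]
  rw [List.filter_eq_self.2 ?_]
  intro q hq
  simp only [List.mem_singleton] at hq
  subst hq
  simp only [decide_eq_true_eq]
  intro q' hq' _ _
  simp only [List.mem_singleton] at hq'
  subst hq'
  exact le_refl _

end PreTree

namespace FreeKAD
open PreTree
variable {α : Type}

theorem pointed_interp1 : ∀ u : Term1 α, markCount (interp1 u) = 1
  | .var a => markCount_arrow a
  | .one => markCount_trivial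
  | .comp s t => by
    show markCount (concat (interp1 s) (interp1 t)) = 1
    unfold concat
    have hg : markCount (graft (interp1 t) (interp1 s)) = 1 := by
      rw [markCount_graft (interp1 t) (interp1 s) (by rw [pointed_interp1 s]),
        pointed_interp1 s, pointed_interp1 t]
    rw [markCount_reduce_eq _ (by rw [hg]), hg]
  | .dom s => by
    show markCount (domTree (interp1 s)) = 1
    unfold domTree
    rw [markCount_reduce_eq _ (by rw [markCount_pointAtRoot]), markCount_pointAtRoot]

theorem reduced_interp1 : ∀ u : Term1 α, Reduced (interp1 u)
  | .var a => reduce_arrow a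
  | .one => reduce_trivial
  | .comp s t => reduce_idem _
  | .dom s => reduce_idem _

theorem rinterp1_hom {X : Type} (f : α → X → X → Prop) :
    ∀ (u : Term1 α) (x y : X), rinterp1 f u x y ↔ hom f y (interp1 u) x
  | .var a, x, y => by
    show f a x y ↔ hom f y (arrow a) x
    rw [arrow, hom_iff]
    constructor
    · intro hf
      refine ⟨by simp, fun p hp => ?_⟩
      simp only [List.mem_singleton] at hp
      subst hp
      refine ⟨y, hf, ?_⟩
      rw [hom_iff]
      exact ⟨fun _ => rfl, by simp⟩
    · rintro ⟨-, hc⟩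
      obtain ⟨z, hz, hhz⟩ := hc (a, node true []) (by simp)
      rw [hom_iff] at hhz
      rw [← hhz.1 rfl]
      exact hz
  | .one, x, y => by
    show x = y ↔ hom f y trivialTree x
    rw [trivialTree, hom_iff]
    constructor
    · intro hxy
      exact ⟨fun _ => hxy, by simp⟩
    · rintro ⟨hm, -⟩
      exact hm rfl
  | .comp s t, x, y => by
    show (∃ z, rinterp1 f s x z ∧ rinterp1 f t z y) ↔
      hom f y (concat (interp1 s) (interp1 t)) x
    unfold concat
    rw [hom_reduce, hom_graft f y (interp1 t) (interp1 s) x (pointed_interp1 s)]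
    constructor
    · rintro ⟨z, h1, h2⟩
      exact ⟨z, (rinterp1_hom f s x z).1 h1, (rinterp1_hom f t z y).1 h2⟩
    · rintro ⟨z, h1, h2⟩
      exact ⟨z, (rinterp1_hom f s x z).2 h1, (rinterp1_hom f t z y).2 h2⟩
  | .dom s, x, y => by
    show (x = y ∧ ∃ z, rinterp1 f s x z) ↔ hom f y (domTree (interp1 s)) x
    unfold domTree
    rw [hom_reduce, hom_pointAtRoot f y (interp1 s) x (pointed_interp1 s)]
    constructor
    · rintro ⟨hxy, z, hz⟩
      exact ⟨hxy, z, (rinterp1_hom f s x z).1 hz⟩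
    · rintro ⟨hxy, z, hz⟩
      exact ⟨hxy, z, (rinterp1_hom f s x z).2 hz⟩

end FreeKAD

namespace FreeKAD
open PreTree

/-- Completeness with respect to relations for the
signature `{∘, 1, D}`: if for every set `X` and every assignment `f` of
binary relations on `X` to the variables the relational interpretations of
`s` and `t` under `f` coincide, then `⟨s⟩ = ⟨t⟩` (equality of trees, whose
children collections are sets, is `eqv`). -/
theorem completeness_comp_one_dom {α : Type} (s t : Term1 α)
    (h : ∀ (X : Type) (f : α → X → X → Prop), rinterp1 f s = rinterp1 f t) :
    eqv (interp1 s) (interp1 t) := by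
  have hf := h (PreTree α) childRel
  -- le (interp1 s) (interp1 t)
  obtain ⟨y₁, hy₁, hyh₁⟩ := exists_point_hom (interp1 s) (pointed_interp1 s)
  have h1 : rinterp1 childRel s (interp1 s) y₁ :=
    (rinterp1_hom childRel s (interp1 s) y₁).2 hyh₁
  have h2 : rinterp1 childRel t (interp1 s) y₁ := by rw [← hf]; exact h1
  have h3 : hom childRel y₁ (interp1 t) (interp1 s) :=
    (rinterp1_hom childRel t (interp1 s) y₁).1 h2
  have l1 : le (interp1 s) (interp1 t) := hom_to_le y₁ hy₁ (interp1 t) (interp1 s) h3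
  -- le (interp1 t) (interp1 s)
  obtain ⟨y₂, hy₂, hyh₂⟩ := exists_point_hom (interp1 t) (pointed_interp1 t)
  have h4 : rinterp1 childRel t (interp1 t) y₂ :=
    (rinterp1_hom childRel t (interp1 t) y₂).2 hyh₂
  have h5 : rinterp1 childRel s (interp1 t) y₂ := by rw [hf]; exact h4
  have h6 : hom childRel y₂ (interp1 s) (interp1 t) :=
    (rinterp1_hom childRel s (interp1 t) y₂).1 h5
  have l2 : le (interp1 t) (interp1 s) := hom_to_le y₂ hy₂ (interp1 s) (interp1 t) h6
  exact eqv_of_le_le (interp1 s) (interp1 t) (reduced_interp1 s) (reduced_interp1 t) l1 l2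

end FreeKAD
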